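/- Let α, β ∈ ℝ, 0 ≤ d < 1 with (2α − |β|)(1 − d) > |β|, β ≠ 0, and L > 0. Define Ψ(μ₁, μ₂) = [[−2α + |β| + μ₁L(1 + α²) + μ₂|β|, β(1 − Lμ₁α)], [β(1 − Lμ₁α), |β|(d − 1) + Lμ₁β²]]. If 0 < μ₁ < ((2α − |β|)(1 − d) − |β|)/(L(1 − d)(1 + α²)) and μ₂ = ((2α − |β|)(1 − d) − |β| − L(1 − d)(1 + α²)μ₁)/(|β|(1 − d)), then the (1,1) entry of Ψ(μ₁, μ₂) is negative and det Ψ(μ₁, μ₂) > 0; hence Ψ(μ₁, μ₂) is negative definite. -/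

import Mathlib

set_option maxHeartbeats 1000000 in
theorem stmt_10 (α β d L μ₁ μ₂ : ℝ) (hβ : β ≠ 0) (hd0 : 0 ≤ d) (hd1 : d < 1)
    (hcond : (2*α - |β|) * (1 - d) > |β|) (hL : 0 < L)
    (hμ₁0 : 0 < μ₁)
    (hμ₁ : μ₁ < ((2*α - |β|) * (1 - d) - |β|) / (L * (1 - d) * (1 + α^2)))
    (hμ₂ : μ₂ = ((2*α - |β|) * (1 - d) - |β| - L * (1 - d) * (1 + α^2) * μ₁)
              / (|β| * (1 - d))) :
    (-2*α + |β| + μ₁ * L * (1 + α^2) + μ₂ * |β| < 0) ∧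
    ((-2*α + |β| + μ₁ * L * (1 + α^2) + μ₂ * |β|) * (|β| * (d - 1) + L * μ₁ * β^2)
      - (β * (1 - L * μ₁ * α))^2 > 0) ∧
    (∀ x y : ℝ, (x, y) ≠ ((0:ℝ), (0:ℝ)) →
      (-2*α + |β| + μ₁ * L * (1 + α^2) + μ₂ * |β|) * x^2
        + 2 * (β * (1 - L * μ₁ * α)) * x * y
        + (|β| * (d - 1) + L * μ₁ * β^2) * y^2 < 0) := by
  have hb : 0 < |β| := abs_pos.mpr hβ
  have h1d : 0 < 1 - d := by linarith
  have hA : (-2*α + |β| + μ₁ * L * (1 + α^2) + μ₂ * |β|) = -|β|/(1-d) := by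
    rw [hμ₂]; field_simp; ring
  have hApos : 2 * α * (1 - d) - |β| > 0 := by nlinarith
  have hα2 : (0:ℝ) < 1 + α^2 := by positivity
  have hkey : L * μ₁ * (1 - d) * (1 + α^2) < (2*α - |β|) * (1 - d) - |β| := by
    have h := (lt_div_iff₀ (by positivity)).mp hμ₁
    nlinarith
  have hbb : β^2 = |β|^2 := (sq_abs β).symm
  have hAneg : -2*α + |β| + μ₁ * L * (1 + α^2) + μ₂ * |β| < 0 := by
    rw [hA]; exact div_neg_of_neg_of_pos (by linarith) h1d
  have hdet : (-2*α + |β| + μ₁ * L * (1 + α^2) + μ₂ * |β|) * (|β| * (d - 1) + L * μ₁ * β^2)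
      - (β * (1 - L * μ₁ * α))^2 > 0 := by
    rw [hA]
    have hexp : -|β|/(1-d) * (|β| * (d - 1) + L * μ₁ * β^2)
        - (β * (1 - L * μ₁ * α))^2
        = |β|^2 * (L * μ₁) * ((2*α - |β|/(1-d)) - L * μ₁ * α^2) := by
      field_simp
      rw [hbb]; ring
    rw [hexp]
    have h2 : L * μ₁ * (1 + α^2) < (2*α - |β|) - |β|/(1-d) := by
      have heq : (2*α - |β|) - |β|/(1-d) = ((2*α - |β|)*(1-d) - |β|)/(1-d) := by
        field_simp
      rw [heq, lt_div_iff₀ h1d]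
      nlinarith [hkey]
    have : (0:ℝ) < (2*α - |β|/(1-d)) - L * μ₁ * α^2 := by nlinarith [mul_pos (mul_pos hL hμ₁0) hα2]
    positivity
  refine ⟨hAneg, hdet, fun x y hxy => ?_⟩
  set A := -2*α + |β| + μ₁ * L * (1 + α^2) + μ₂ * |β| with hAdef
  set B := β * (1 - L * μ₁ * α) with hBdef
  set C := |β| * (d - 1) + L * μ₁ * β^2 with hCdef
  have hdet' : A * C - B^2 > 0 := hdet
  rcases eq_or_ne y 0 with hy | hy
  · have hx : x ≠ 0 := by
      intro h; exact hxy (by rw [h, hy])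
    have hx2 : 0 < x^2 := by positivity
    subst hy
    have heq : A * x^2 + 2 * B * x * 0 + C * 0^2 = A * x^2 := by ring
    rw [heq]
    exact mul_neg_of_neg_of_pos hAneg hx2
  · have hy2 : 0 < y^2 := by positivity
    have key : A * (A * x^2 + 2 * B * x * y + C * y^2)
        = (A*x + B*y)^2 + (A*C - B^2) * y^2 := by ring
    have hpos : 0 < (A*x + B*y)^2 + (A*C - B^2) * y^2 := by positivity
    have hAQ : 0 < A * (A * x^2 + 2 * B * x * y + C * y^2) := key ▸ hpos
    by_contra h
    push_neg at h
    have := mul_nonpos_of_nonpos_of_nonneg hAneg.le h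
    linarith
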